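/- Let n ≥ 1, let M ∈ ℝ^{n×n}, let μ, ν ∈ ℝ^n be probability vectors with strictly positive entries, and let λ > 0. Then the unique minimizer P* over the transport polytope U(μ,ν) of P ↦ ⟨P, M⟩ + (1/λ) Σ_{i,j} P_{ij} log P_{ij} has strictly positive entries and admits the Sinkhorn factorization P*_{ij} = u_i · exp(−λ M_{ij}) · v_j for some vectors u, v ∈ ℝ^n with strictly positive entries. -/

import Mathlib

/-- The transport polytope `U(μ, ν)`: nonnegative matrices with row sums `μ`
and column sums `ν`. -/
def transportPolytope (n : ℕ) (μ ν : Fin n → ℝ) : Set (Matrix (Fin n) (Fin n) ℝ) :=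
  {P | (∀ i j, 0 ≤ P i j) ∧ (∀ i, ∑ j, P i j = μ i) ∧ (∀ j, ∑ i, P i j = ν j)}

/-- Entropy-regularized OT objective `⟨P, M⟩ + (1/λ) Σ P_{ij} log P_{ij}`
(with the convention `0 · log 0 = 0`, automatic since `Real.log 0 = 0`). -/
noncomputable def entRegObjective (n : ℕ) (M : Matrix (Fin n) (Fin n) ℝ) (lam : ℝ)
    (P : Matrix (Fin n) (Fin n) ℝ) : ℝ :=
  (∑ i, ∑ j, P i j * M i j) + (1 / lam) * ∑ i, ∑ j, P i j * Real.log (P i j)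

lemma pairSum {n : ℕ} {j0 j1 : Fin n} (hj : j0 ≠ j1) (H : Fin n → ℝ)
    (h : ∀ j, j ≠ j0 → j ≠ j1 → H j = 0) :
    ∑ j, H j = H j0 + H j1 := by
  rw [← Finset.sum_pair hj]
  symm
  apply Finset.sum_subset (Finset.subset_univ _)
  intro x _ hx
  simp only [Finset.mem_insert, Finset.mem_singleton, not_or] at hx
  exact h x hx.1 hx.2

lemma sum4diff {n : ℕ} {i0 i1 j0 j1 : Fin n} (hi : i0 ≠ i1) (hj : j0 ≠ j1)
    (F G : Fin n → Fin n → ℝ)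
    (h : ∀ i j, ¬((i = i0 ∨ i = i1) ∧ (j = j0 ∨ j = j1)) → F i j = G i j) :
    (∑ i, ∑ j, F i j) = (∑ i, ∑ j, G i j)
      + ((F i0 j0 - G i0 j0) + (F i0 j1 - G i0 j1)
        + (F i1 j0 - G i1 j0) + (F i1 j1 - G i1 j1)) := by
  have key : (∑ i, ∑ j, (F i j - G i j))
      = (F i0 j0 - G i0 j0) + (F i0 j1 - G i0 j1)
        + (F i1 j0 - G i1 j0) + (F i1 j1 - G i1 j1) := by
    have hrow : ∀ i, ∑ j, (F i j - G i j) = (F i j0 - G i j0) + (F i j1 - G i j1) := by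
      intro i
      refine pairSum hj _ (fun j h1 h2 => ?_)
      rw [h i j (by tauto)]; ring
    calc ∑ i, ∑ j, (F i j - G i j)
        = ∑ i, ((F i j0 - G i j0) + (F i j1 - G i j1)) := by
          exact Finset.sum_congr rfl (fun i _ => hrow i)
      _ = ((F i0 j0 - G i0 j0) + (F i0 j1 - G i0 j1))
          + ((F i1 j0 - G i1 j0) + (F i1 j1 - G i1 j1)) := by
          refine pairSum hi _ (fun i h1 h2 => ?_)
          rw [h i j0 (by tauto), h i j1 (by tauto)]; ring
      _ = _ := by ring
  have expand : (∑ i, ∑ j, (F i j - G i j)) = (∑ i, ∑ j, F i j) - (∑ i, ∑ j, G i j) := by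
    simp [Finset.sum_sub_distrib]
  linarith [key, expand]

/-- Perturbation matrix: add `t` at `(i0,j0)` and `(i1,j1)`, subtract at the
cross positions. -/
noncomputable def pmat {n : ℕ} (P : Matrix (Fin n) (Fin n) ℝ) (i0 i1 j0 j1 : Fin n)
    (t : ℝ) : Matrix (Fin n) (Fin n) ℝ :=
  fun i j => P i j + t * (((if i = i0 then (1:ℝ) else 0) - (if i = i1 then 1 else 0))
      * ((if j = j0 then (1:ℝ) else 0) - (if j = j1 then 1 else 0)))

section pmat
variable {n : ℕ} (P : Matrix (Fin n) (Fin n) ℝ) {i0 i1 j0 j1 : Fin n} (t : ℝ)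

lemma pmat_apply_ne {i j : Fin n} (h : ¬((i = i0 ∨ i = i1) ∧ (j = j0 ∨ j = j1))) :
    pmat P i0 i1 j0 j1 t i j = P i j := by
  rcases not_and_or.mp h with h' | h' <;> push_neg at h' <;>
    simp [pmat, h'.1, h'.2]

variable (hi : i0 ≠ i1) (hj : j0 ≠ j1)
include hi hj

lemma pmat_00 : pmat P i0 i1 j0 j1 t i0 j0 = P i0 j0 + t := by
  simp [pmat, hi, hj]
lemma pmat_01 : pmat P i0 i1 j0 j1 t i0 j1 = P i0 j1 - t := by
  simp [pmat, hi, hj.symm]; ring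
lemma pmat_10 : pmat P i0 i1 j0 j1 t i1 j0 = P i1 j0 - t := by
  simp [pmat, hi.symm, hj]; ring
lemma pmat_11 : pmat P i0 i1 j0 j1 t i1 j1 = P i1 j1 + t := by
  simp [pmat, hi.symm, hj.symm]

omit hi hj in
lemma pmat_row (i : Fin n) : ∑ j, pmat P i0 i1 j0 j1 t i j = ∑ j, P i j := by
  simp only [pmat, Finset.sum_add_distrib, ← Finset.mul_sum, ← Finset.sum_sub_distrib]
  simp [Finset.sum_ite_eq', Finset.sum_sub_distrib]

omit hi hj in
lemma pmat_col (j : Fin n) : ∑ i, pmat P i0 i1 j0 j1 t i j = ∑ i, P i j := by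
  simp only [pmat, Finset.sum_add_distrib]
  have : ∑ i, t * (((if i = i0 then (1:ℝ) else 0) - (if i = i1 then 1 else 0))
      * ((if j = j0 then (1:ℝ) else 0) - (if j = j1 then 1 else 0))) = 0 := by
    simp only [mul_comm t, Finset.sum_mul, ← Finset.mul_sum]
    rw [← Finset.sum_mul, ← Finset.sum_mul]
    have : ∑ i, ((if i = i0 then (1:ℝ) else 0) - if i = i1 then 1 else 0) = 0 := by
      rw [Finset.sum_sub_distrib]; simp [Finset.sum_ite_eq']
    rw [this, zero_mul, zero_mul]
  rw [this, add_zero]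

end pmat


section main
variable {n : ℕ} {μ ν : Fin n → ℝ} (P : Matrix (Fin n) (Fin n) ℝ)
  {i0 i1 j0 j1 : Fin n} (t : ℝ) (hi : i0 ≠ i1) (hj : j0 ≠ j1)

include hi hj in
lemma pmat_mem (hP : P ∈ transportPolytope n μ ν)
    (h00 : 0 ≤ P i0 j0 + t) (h01 : 0 ≤ P i0 j1 - t)
    (h10 : 0 ≤ P i1 j0 - t) (h11 : 0 ≤ P i1 j1 + t) :
    pmat P i0 i1 j0 j1 t ∈ transportPolytope n μ ν := by
  obtain ⟨hpos, hrow, hcol⟩ := hP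
  refine ⟨fun i j => ?_, fun i => by rw [pmat_row]; exact hrow i,
    fun j => by rw [pmat_col]; exact hcol j⟩
  by_cases h : (i = i0 ∨ i = i1) ∧ (j = j0 ∨ j = j1)
  · obtain ⟨h1 | h1, h2 | h2⟩ := h <;> subst h1 <;> subst h2
    · rw [pmat_00 P t hi hj]; exact h00
    · rw [pmat_01 P t hi hj]; exact h01
    · rw [pmat_10 P t hi hj]; exact h10
    · rw [pmat_11 P t hi hj]; exact h11
  · rw [pmat_apply_ne P t h]; exact hpos i j

include hi hj in
lemma pmat_obj (M : Matrix (Fin n) (Fin n) ℝ) (lam : ℝ) :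
    entRegObjective n M lam (pmat P i0 i1 j0 j1 t)
      = entRegObjective n M lam P
        + t * (M i0 j0 - M i0 j1 - M i1 j0 + M i1 j1)
        + (1 / lam) * (((P i0 j0 + t) * Real.log (P i0 j0 + t) - P i0 j0 * Real.log (P i0 j0))
          + ((P i0 j1 - t) * Real.log (P i0 j1 - t) - P i0 j1 * Real.log (P i0 j1))
          + ((P i1 j0 - t) * Real.log (P i1 j0 - t) - P i1 j0 * Real.log (P i1 j0))
          + ((P i1 j1 + t) * Real.log (P i1 j1 + t) - P i1 j1 * Real.log (P i1 j1))) := by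
  have h1 : ∀ i j, ¬((i = i0 ∨ i = i1) ∧ (j = j0 ∨ j = j1)) →
      pmat P i0 i1 j0 j1 t i j * M i j = P i j * M i j := fun i j h => by
    rw [pmat_apply_ne P t h]
  have h2 : ∀ i j, ¬((i = i0 ∨ i = i1) ∧ (j = j0 ∨ j = j1)) →
      pmat P i0 i1 j0 j1 t i j * Real.log (pmat P i0 i1 j0 j1 t i j)
        = P i j * Real.log (P i j) := fun i j h => by
    rw [pmat_apply_ne P t h]
  have e1 : (∑ i, ∑ j, pmat P i0 i1 j0 j1 t i j * M i j)
      = (∑ i, ∑ j, P i j * M i j)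
        + ((pmat P i0 i1 j0 j1 t i0 j0 * M i0 j0 - P i0 j0 * M i0 j0)
          + (pmat P i0 i1 j0 j1 t i0 j1 * M i0 j1 - P i0 j1 * M i0 j1)
          + (pmat P i0 i1 j0 j1 t i1 j0 * M i1 j0 - P i1 j0 * M i1 j0)
          + (pmat P i0 i1 j0 j1 t i1 j1 * M i1 j1 - P i1 j1 * M i1 j1)) :=
    sum4diff hi hj _ _ h1
  have e2 : (∑ i, ∑ j, pmat P i0 i1 j0 j1 t i j * Real.log (pmat P i0 i1 j0 j1 t i j))
      = (∑ i, ∑ j, P i j * Real.log (P i j))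
        + ((pmat P i0 i1 j0 j1 t i0 j0 * Real.log (pmat P i0 i1 j0 j1 t i0 j0)
            - P i0 j0 * Real.log (P i0 j0))
          + (pmat P i0 i1 j0 j1 t i0 j1 * Real.log (pmat P i0 i1 j0 j1 t i0 j1)
            - P i0 j1 * Real.log (P i0 j1))
          + (pmat P i0 i1 j0 j1 t i1 j0 * Real.log (pmat P i0 i1 j0 j1 t i1 j0)
            - P i1 j0 * Real.log (P i1 j0))
          + (pmat P i0 i1 j0 j1 t i1 j1 * Real.log (pmat P i0 i1 j0 j1 t i1 j1)
            - P i1 j1 * Real.log (P i1 j1))) :=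
    sum4diff hi hj _ _ h2
  rw [entRegObjective, entRegObjective, e1, e2,
    pmat_00 P t hi hj, pmat_01 P t hi hj, pmat_10 P t hi hj, pmat_11 P t hi hj]
  ring

end main

lemma pmat_zero {n : ℕ} (P : Matrix (Fin n) (Fin n) ℝ) (i0 i1 j0 j1 : Fin n) :
    pmat P i0 i1 j0 j1 0 = P := by
  funext i j; simp [pmat]

section thm
variable {n : ℕ} {M : Matrix (Fin n) (Fin n) ℝ} {μ ν : Fin n → ℝ}
  {lam : ℝ} {Pstar : Matrix (Fin n) (Fin n) ℝ}

set_option maxHeartbeats 1000000 in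
lemma pos_part (hμpos : ∀ i, 0 < μ i) (hνpos : ∀ j, 0 < ν j)
    (hlam : 0 < lam) (hmem : Pstar ∈ transportPolytope n μ ν)
    (hmin : ∀ Q ∈ transportPolytope n μ ν,
      entRegObjective n M lam Pstar ≤ entRegObjective n M lam Q) :
    ∀ i j, 0 < Pstar i j := by
  intro i0 j0
  by_contra hc
  obtain ⟨hpos, hrow, hcol⟩ := hmem
  have hp00 : Pstar i0 j0 = 0 := le_antisymm (not_lt.mp hc) (hpos i0 j0)
  -- find a positive entry in row i0 and column j0
  obtain ⟨j1, hj1⟩ : ∃ j, 0 < Pstar i0 j := by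
    by_contra h; push_neg at h
    have h0 : ∑ j, Pstar i0 j = 0 :=
      Finset.sum_eq_zero fun j _ => le_antisymm (h j) (hpos i0 j)
    rw [hrow i0] at h0; exact (hμpos i0).ne' h0
  obtain ⟨i1, hi1⟩ : ∃ i, 0 < Pstar i j0 := by
    by_contra h; push_neg at h
    have h0 : ∑ i, Pstar i j0 = 0 :=
      Finset.sum_eq_zero fun i _ => le_antisymm (h i) (hpos i j0)
    rw [hcol j0] at h0; exact (hνpos j0).ne' h0
  have hj : j0 ≠ j1 := fun h => by rw [← h] at hj1; exact hj1.ne' hp00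
  have hi : i0 ≠ i1 := fun h => by rw [← h] at hi1; exact hi1.ne' hp00
  set p01 := Pstar i0 j1 with hp01def
  set p10 := Pstar i1 j0 with hp10def
  set p11 := Pstar i1 j1 with hp11def
  have hp11 : 0 ≤ p11 := hpos i1 j1
  set K := M i0 j0 - M i0 j1 - M i1 j0 + M i1 j1 with hK
  set B := (1 + Real.log (p11 + 1)) - Real.log p01 - Real.log p10 with hB
  set t := min (min (p01 / 2) (p10 / 2)) (min 1 (Real.exp (-lam * K - B - 1))) with htdef
  have ht : 0 < t := by
    apply lt_min (lt_min (by linarith) (by linarith))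
    exact lt_min one_pos (Real.exp_pos _)
  have ht01 : t ≤ p01 / 2 := le_trans (min_le_left _ _) (min_le_left _ _)
  have ht10 : t ≤ p10 / 2 := le_trans (min_le_left _ _) (min_le_right _ _)
  have ht1 : t ≤ 1 := le_trans (min_le_right _ _) (min_le_left _ _)
  have hte : t ≤ Real.exp (-lam * K - B - 1) :=
    le_trans (min_le_right _ _) (min_le_right _ _)
  have hlogt : Real.log t ≤ -lam * K - B - 1 := by
    calc Real.log t ≤ Real.log (Real.exp (-lam * K - B - 1)) :=
          Real.log_le_log ht hte
      _ = _ := Real.log_exp _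
  -- membership of the perturbed matrix
  have hQmem : pmat Pstar i0 i1 j0 j1 t ∈ transportPolytope n μ ν := by
    refine pmat_mem Pstar t hi hj ⟨hpos, hrow, hcol⟩ (by linarith [hpos i0 j0]) ?_ ?_ ?_
    · linarith
    · linarith
    · linarith
  have hobj := pmat_obj Pstar t hi hj M lam
  rw [hp00] at hobj
  -- bounds on the entropy differences
  have b00 : (0 + t) * Real.log (0 + t) - 0 * Real.log 0 = t * Real.log t := by
    simp
  have b01 : (p01 - t) * Real.log (p01 - t) - p01 * Real.log p01
      ≤ t * (-Real.log p01) := by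
    have h1 : Real.log (p01 - t) ≤ Real.log p01 :=
      Real.log_le_log (by linarith) (by linarith)
    nlinarith [mul_le_mul_of_nonneg_left h1 (by linarith : (0:ℝ) ≤ p01 - t)]
  have b10 : (p10 - t) * Real.log (p10 - t) - p10 * Real.log p10
      ≤ t * (-Real.log p10) := by
    have h1 : Real.log (p10 - t) ≤ Real.log p10 :=
      Real.log_le_log (by linarith) (by linarith)
    nlinarith [mul_le_mul_of_nonneg_left h1 (by linarith : (0:ℝ) ≤ p10 - t)]
  have b11 : (p11 + t) * Real.log (p11 + t) - p11 * Real.log p11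
      ≤ t * (1 + Real.log (p11 + 1)) := by
    rcases eq_or_lt_of_le hp11 with h | h
    · -- p11 = 0
      rw [← h]
      have hlt : Real.log t ≤ 1 := by
        calc Real.log t ≤ Real.log 1 := Real.log_le_log ht ht1
          _ = 0 := Real.log_one
          _ ≤ 1 := zero_le_one
      have h2 : t * Real.log t ≤ t * 1 := mul_le_mul_of_nonneg_left hlt ht.le
      simp only [zero_add, Real.log_zero, zero_mul, sub_zero, Real.log_one]
      linarith
    · -- p11 > 0
      have hratio : Real.log (p11 + t) - Real.log p11 ≤ t / p11 := by
        have hq : Real.log ((p11 + t) / p11) ≤ (p11 + t) / p11 - 1 :=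
          Real.log_le_sub_one_of_pos (by positivity)
        rw [Real.log_div (by linarith) h.ne'] at hq
        have heq : (p11 + t) / p11 - 1 = t / p11 := by field_simp; ring
        rw [heq] at hq
        exact hq
      have hmono : Real.log (p11 + t) ≤ Real.log (p11 + 1) :=
        Real.log_le_log (by linarith) (by linarith)
      have key : p11 * (Real.log (p11 + t) - Real.log p11) ≤ t := by
        have := mul_le_mul_of_nonneg_left hratio h.le
        rwa [mul_div_cancel₀ t h.ne'] at this
      have h3 : t * Real.log (p11 + t) ≤ t * Real.log (p11 + 1) :=
        mul_le_mul_of_nonneg_left hmono ht.le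
      have expand : (p11 + t) * Real.log (p11 + t) - p11 * Real.log p11
          = p11 * (Real.log (p11 + t) - Real.log p11) + t * Real.log (p11 + t) := by
        ring
      linarith
  -- conclude
  have hΔ : entRegObjective n M lam (pmat Pstar i0 i1 j0 j1 t)
      ≤ entRegObjective n M lam Pstar + t * K
        + (1 / lam) * (t * Real.log t + t * B) := by
    rw [hobj]
    have hsum : ((0 + t) * Real.log (0 + t) - 0 * Real.log 0)
        + ((p01 - t) * Real.log (p01 - t) - p01 * Real.log p01)
        + ((p10 - t) * Real.log (p10 - t) - p10 * Real.log p10)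
        + ((p11 + t) * Real.log (p11 + t) - p11 * Real.log p11)
        ≤ t * Real.log t + t * B := by
      rw [b00, hB]; nlinarith [b01, b10, b11]
    have := mul_le_mul_of_nonneg_left hsum (le_of_lt (by positivity : (0:ℝ) < 1 / lam))
    linarith
  have hneg : t * K + (1 / lam) * (t * Real.log t + t * B) < 0 := by
    have h1 : t * Real.log t ≤ t * (-lam * K - B - 1) :=
      mul_le_mul_of_nonneg_left hlogt ht.le
    have h2 : (1 / lam) * (t * Real.log t + t * B)
        ≤ (1 / lam) * (t * (-lam * K - B - 1) + t * B) := by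
      apply mul_le_mul_of_nonneg_left _ (le_of_lt (by positivity))
      linarith
    have h3 : (1 / lam) * (t * (-lam * K - B - 1) + t * B) = -t * K - t / lam := by
      field_simp; ring
    have h4 : 0 < t / lam := by positivity
    linarith
  have := hmin _ hQmem
  linarith


set_option maxHeartbeats 1000000 in
lemma stationary (hlam : 0 < lam) (hmem : Pstar ∈ transportPolytope n μ ν)
    (hmin : ∀ Q ∈ transportPolytope n μ ν,
      entRegObjective n M lam Pstar ≤ entRegObjective n M lam Q)
    (hpos : ∀ i j, 0 < Pstar i j) {i0 i1 j0 j1 : Fin n}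
    (hi : i0 ≠ i1) (hj : j0 ≠ j1) :
    lam * M i0 j0 + Real.log (Pstar i0 j0) + (lam * M i1 j1 + Real.log (Pstar i1 j1))
      = lam * M i0 j1 + Real.log (Pstar i0 j1)
        + (lam * M i1 j0 + Real.log (Pstar i1 j0)) := by
  set p00 := Pstar i0 j0 with hp00
  set p01 := Pstar i0 j1 with hp01
  set p10 := Pstar i1 j0 with hp10
  set p11 := Pstar i1 j1 with hp11
  have hp00' : 0 < p00 := hpos i0 j0
  have hp01' : 0 < p01 := hpos i0 j1
  have hp10' : 0 < p10 := hpos i1 j0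
  have hp11' : 0 < p11 := hpos i1 j1
  set f : ℝ → ℝ := fun t => entRegObjective n M lam (pmat Pstar i0 i1 j0 j1 t) with hf
  -- f is given by an explicit formula
  have hfeq : ∀ t, f t = entRegObjective n M lam Pstar
      + t * (M i0 j0 - M i0 j1 - M i1 j0 + M i1 j1)
      + (1 / lam) * (((p00 + t) * Real.log (p00 + t) - p00 * Real.log p00)
        + ((p01 - t) * Real.log (p01 - t) - p01 * Real.log p01)
        + ((p10 - t) * Real.log (p10 - t) - p10 * Real.log p10)
        + ((p11 + t) * Real.log (p11 + t) - p11 * Real.log p11)) :=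
    fun t => pmat_obj Pstar t hi hj M lam
  -- f has a local minimum at 0
  have hf0 : f 0 = entRegObjective n M lam Pstar := by
    rw [hf]; simp only [pmat_zero]
  have hlocal : IsLocalMin f 0 := by
    have hev : ∀ᶠ t in nhds (0:ℝ), f 0 ≤ f t := by
      rw [Metric.eventually_nhds_iff]
      refine ⟨min (min p00 p01) (min p10 p11),
        lt_min (lt_min hp00' hp01') (lt_min hp10' hp11'), fun t ht => ?_⟩
      rw [Real.dist_eq, sub_zero] at ht
      obtain ⟨hta, htb⟩ := abs_lt.mp ht
      have e00 : min (min p00 p01) (min p10 p11) ≤ p00 :=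
        le_trans (min_le_left _ _) (min_le_left _ _)
      have e01 : min (min p00 p01) (min p10 p11) ≤ p01 :=
        le_trans (min_le_left _ _) (min_le_right _ _)
      have e10 : min (min p00 p01) (min p10 p11) ≤ p10 :=
        le_trans (min_le_right _ _) (min_le_left _ _)
      have e11 : min (min p00 p01) (min p10 p11) ≤ p11 :=
        le_trans (min_le_right _ _) (min_le_right _ _)
      have hQmem := pmat_mem Pstar t hi hj hmem (by linarith) (by linarith)
        (by linarith) (by linarith)
      rw [hf0]
      exact hmin _ hQmem
    exact hev
  -- derivative of f at 0
  have hd00 : HasDerivAt (fun t : ℝ => (p00 + t) * Real.log (p00 + t))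
      (Real.log p00 + 1) 0 := by
    have hinner : HasDerivAt (fun t : ℝ => p00 + t) 1 0 := by
      simpa using (hasDerivAt_id (0:ℝ)).const_add p00
    have houter : HasDerivAt (fun x : ℝ => x * Real.log x) (Real.log p00 + 1)
        (p00 + 0) := by simpa using Real.hasDerivAt_mul_log hp00'.ne'
    simpa [Function.comp_def] using houter.comp 0 hinner
  have hd11 : HasDerivAt (fun t : ℝ => (p11 + t) * Real.log (p11 + t))
      (Real.log p11 + 1) 0 := by
    have hinner : HasDerivAt (fun t : ℝ => p11 + t) 1 0 := by
      simpa using (hasDerivAt_id (0:ℝ)).const_add p11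
    have houter : HasDerivAt (fun x : ℝ => x * Real.log x) (Real.log p11 + 1)
        (p11 + 0) := by simpa using Real.hasDerivAt_mul_log hp11'.ne'
    simpa [Function.comp_def] using houter.comp 0 hinner
  have hd01 : HasDerivAt (fun t : ℝ => (p01 - t) * Real.log (p01 - t))
      (-(Real.log p01 + 1)) 0 := by
    have hinner : HasDerivAt (fun t : ℝ => p01 - t) (-1) 0 := by
      simpa using (hasDerivAt_id (0:ℝ)).const_sub p01
    have houter : HasDerivAt (fun x : ℝ => x * Real.log x) (Real.log p01 + 1)
        (p01 - 0) := by simpa using Real.hasDerivAt_mul_log hp01'.ne'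
    have := houter.comp 0 hinner
    simpa [Function.comp_def, mul_comm] using this
  have hd10 : HasDerivAt (fun t : ℝ => (p10 - t) * Real.log (p10 - t))
      (-(Real.log p10 + 1)) 0 := by
    have hinner : HasDerivAt (fun t : ℝ => p10 - t) (-1) 0 := by
      simpa using (hasDerivAt_id (0:ℝ)).const_sub p10
    have houter : HasDerivAt (fun x : ℝ => x * Real.log x) (Real.log p10 + 1)
        (p10 - 0) := by simpa using Real.hasDerivAt_mul_log hp10'.ne'
    have := houter.comp 0 hinner
    simpa [Function.comp_def, mul_comm] using this
  have hS : HasDerivAt (fun t : ℝ =>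
      ((p00 + t) * Real.log (p00 + t) - p00 * Real.log p00)
        + ((p01 - t) * Real.log (p01 - t) - p01 * Real.log p01)
        + ((p10 - t) * Real.log (p10 - t) - p10 * Real.log p10)
        + ((p11 + t) * Real.log (p11 + t) - p11 * Real.log p11))
      ((Real.log p00 + 1) + (-(Real.log p01 + 1)) + (-(Real.log p10 + 1))
        + (Real.log p11 + 1)) 0 :=
    (((hd00.sub_const _).add (hd01.sub_const _)).add (hd10.sub_const _)).add
      (hd11.sub_const _)
  have hlin : HasDerivAt (fun t : ℝ => entRegObjective n M lam Pstar
      + t * (M i0 j0 - M i0 j1 - M i1 j0 + M i1 j1))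
      (M i0 j0 - M i0 j1 - M i1 j0 + M i1 j1) 0 := by
    simpa using ((hasDerivAt_id (0:ℝ)).mul_const
      (M i0 j0 - M i0 j1 - M i1 j0 + M i1 j1)).const_add
      (entRegObjective n M lam Pstar)
  have hDf : HasDerivAt f
      ((M i0 j0 - M i0 j1 - M i1 j0 + M i1 j1)
        + (1 / lam) * ((Real.log p00 + 1) + (-(Real.log p01 + 1))
          + (-(Real.log p10 + 1)) + (Real.log p11 + 1))) 0 := by
    have hfun : f = fun t : ℝ => entRegObjective n M lam Pstar
        + t * (M i0 j0 - M i0 j1 - M i1 j0 + M i1 j1)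
        + (1 / lam) * (((p00 + t) * Real.log (p00 + t) - p00 * Real.log p00)
          + ((p01 - t) * Real.log (p01 - t) - p01 * Real.log p01)
          + ((p10 - t) * Real.log (p10 - t) - p10 * Real.log p10)
          + ((p11 + t) * Real.log (p11 + t) - p11 * Real.log p11)) :=
      funext hfeq
    rw [hfun]
    exact hlin.add (hS.const_mul (1 / lam))
  have hzero := hlocal.hasDerivAt_eq_zero hDf
  have h2 : lam * ((M i0 j0 - M i0 j1 - M i1 j0 + M i1 j1)
      + (1 / lam) * ((Real.log p00 + 1) + (-(Real.log p01 + 1))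
        + (-(Real.log p10 + 1)) + (Real.log p11 + 1))) = lam * 0 := by
    rw [hzero]
  rw [mul_zero] at h2
  have hlne : lam ≠ 0 := hlam.ne'
  field_simp at h2
  linarith

end thm


/-- The (unique) minimizer of the entropy-regularized
objective over the transport polytope with strictly positive probability
marginals has strictly positive entries and admits a Sinkhorn factorization
`P*_{ij} = u_i exp(−λ M_{ij}) v_j` with strictly positive scaling vectors. -/
theorem entReg_minimizer_sinkhorn_factorization (n : ℕ) (hn : 1 ≤ n)
    (M : Matrix (Fin n) (Fin n) ℝ) (μ ν : Fin n → ℝ)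
    (hμpos : ∀ i, 0 < μ i) (hνpos : ∀ j, 0 < ν j)
    (hμsum : ∑ i, μ i = 1) (hνsum : ∑ j, ν j = 1)
    (lam : ℝ) (hlam : 0 < lam)
    (Pstar : Matrix (Fin n) (Fin n) ℝ)
    (hmem : Pstar ∈ transportPolytope n μ ν)
    (hmin : ∀ Q ∈ transportPolytope n μ ν,
      entRegObjective n M lam Pstar ≤ entRegObjective n M lam Q) :
    (∀ i j, 0 < Pstar i j) ∧
      ∃ u v : Fin n → ℝ, (∀ i, 0 < u i) ∧ (∀ j, 0 < v j) ∧
        ∀ i j, Pstar i j = u i * Real.exp (-lam * M i j) * v j := by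
  have hpos := pos_part hμpos hνpos hlam hmem hmin
  refine ⟨hpos, ?_⟩
  set i0 : Fin n := ⟨0, hn⟩ with hi0
  set j0 : Fin n := ⟨0, hn⟩ with hj0
  set G : Fin n → Fin n → ℝ := fun i j => lam * M i j + Real.log (Pstar i j) with hG
  have hkey : ∀ i j, G i j = (G i j0 - G i0 j0) + G i0 j := by
    intro i j
    by_cases hii : i = i0
    · subst hii; ring
    · by_cases hjj : j = j0
      · subst hjj; ring
      · have hst := stationary hlam hmem hmin hpos (Ne.symm hii) (Ne.symm hjj)
        simp only [hG]
        linarith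
  refine ⟨fun i => Real.exp (G i j0 - G i0 j0), fun j => Real.exp (G i0 j),
    fun i => Real.exp_pos _, fun j => Real.exp_pos _, fun i j => ?_⟩
  have hlog : Real.log (Pstar i j) = (G i j0 - G i0 j0) + G i0 j - lam * M i j := by
    have hk := hkey i j
    simp only [hG] at hk
    simp only [hG]
    linarith
  rw [← Real.exp_log (hpos i j), hlog, ← Real.exp_add, ← Real.exp_add]
  congr 1
  ring
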